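/- In A_g (g ≥ 2, n ≥ 3), for distinct i, j ∈ {2,…,n}: y_i x_j · (x_i y_j) = y_1 ω_i x_j + y_1 x_i ω_j − x_1 ω_i y_j − x_1 y_i ω_j + ω_1 y_i x_j − ω_1 x_i y_j. -/

import Mathlib

/-- Generators of the rational cohomology of the `n`-fold power of a genus-`g` surface:
`a i p`, `b i p` in degree 1 and `w i` (the class `ω_i`) in degree 2.  The indices are
`0`-based: `a i p` stands for the class `a_{i+1}(p+1)` of the paper. -/
inductive SurfGen (n g : ℕ) : Type
  | a (i : Fin n) (p : Fin g)
  | b (i : Fin n) (p : Fin g)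
  | w (i : Fin n)

/-- The cohomological degree of a generator. -/
def SurfGen.deg {n g : ℕ} : SurfGen n g → ℕ
  | .a _ _ => 1
  | .b _ _ => 1
  | .w _ => 2

open FreeAlgebra in
/-- The defining relations of `H^*(Σ_g^{×n}; ℚ)`: within each factor,
`a_i(p)a_i(q) = b_i(p)b_i(q) = 0`, `a_i(p)b_i(q) = δ_{pq} ω_i`, together with
graded (Koszul-signed) commutativity of the generators. -/
inductive SurfRel (n g : ℕ) :
    FreeAlgebra ℚ (SurfGen n g) → FreeAlgebra ℚ (SurfGen n g) → Prop
  | aa (i : Fin n) (p q : Fin g) :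
      SurfRel n g (ι ℚ (SurfGen.a i p) * ι ℚ (SurfGen.a i q)) 0
  | bb (i : Fin n) (p q : Fin g) :
      SurfRel n g (ι ℚ (SurfGen.b i p) * ι ℚ (SurfGen.b i q)) 0
  | ab_eq (i : Fin n) (p : Fin g) :
      SurfRel n g (ι ℚ (SurfGen.a i p) * ι ℚ (SurfGen.b i p)) (ι ℚ (SurfGen.w i))
  | ab_ne (i : Fin n) (p q : Fin g) : p ≠ q →
      SurfRel n g (ι ℚ (SurfGen.a i p) * ι ℚ (SurfGen.b i q)) 0
  | koszul (u v : SurfGen n g) :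
      SurfRel n g (ι ℚ u * ι ℚ v)
        (((-1 : ℚ) ^ (u.deg * v.deg)) • (ι ℚ v * ι ℚ u))

/-- `H^*(Σ_g^{×n}; ℚ)`, presented by generators and relations. -/
def SurfCoh (n g : ℕ) : Type := RingQuot (SurfRel n g)

noncomputable instance (n g : ℕ) : Ring (SurfCoh n g) :=
  inferInstanceAs (Ring (RingQuot (SurfRel n g)))

noncomputable instance (n g : ℕ) : Algebra ℚ (SurfCoh n g) :=
  inferInstanceAs (Algebra ℚ (RingQuot (SurfRel n g)))

/-- The class `a_{i+1}(p+1)`. -/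
noncomputable def gA {n g : ℕ} (i : Fin n) (p : Fin g) : SurfCoh n g :=
  RingQuot.mkAlgHom ℚ (SurfRel n g) (FreeAlgebra.ι ℚ (SurfGen.a i p))

/-- The class `b_{i+1}(p+1)`. -/
noncomputable def gB {n g : ℕ} (i : Fin n) (p : Fin g) : SurfCoh n g :=
  RingQuot.mkAlgHom ℚ (SurfRel n g) (FreeAlgebra.ι ℚ (SurfGen.b i p))

/-- The class `ω_{i+1}`. -/
noncomputable def gW {n g : ℕ} (i : Fin n) : SurfCoh n g :=
  RingQuot.mkAlgHom ℚ (SurfRel n g) (FreeAlgebra.ι ℚ (SurfGen.w i))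

/-- The class `x_{i+1}(p+1)`: equal to `a_{i+1}(p+1)` unless `p+1 = 1` and `i+1 ≥ 2`, in which
case it is `a_{i+1}(1) - a_1(1)`. -/
noncomputable def gX {n g : ℕ} [NeZero n] [NeZero g] (i : Fin n) (p : Fin g) : SurfCoh n g :=
  if p = 0 ∧ i ≠ 0 then gA i p - gA 0 p else gA i p

/-- The class `y_{i+1}(p+1)`: equal to `b_{i+1}(p+1)` unless `p+1 = 1` and `i+1 ≥ 2`, in which
case it is `b_{i+1}(1) - b_1(1)`. -/
noncomputable def gY {n g : ℕ} [NeZero n] [NeZero g] (i : Fin n) (p : Fin g) : SurfCoh n g :=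
  if p = 0 ∧ i ≠ 0 then gB i p - gB 0 p else gB i p

/-- The relations defining the quotient algebra `A_g`: all products
`x_i(p)x_j(q)`, `x_i(p)y_j(q)`, `y_i(p)y_j(q)` with `p, q ≥ 2` and `i ≠ j` are set to zero. -/
inductive ARel (n g : ℕ) [NeZero n] [NeZero g] : SurfCoh n g → SurfCoh n g → Prop
  | xx (i j : Fin n) (p q : Fin g) : i ≠ j → p ≠ 0 → q ≠ 0 → ARel n g (gX i p * gX j q) 0
  | xy (i j : Fin n) (p q : Fin g) : i ≠ j → p ≠ 0 → q ≠ 0 → ARel n g (gX i p * gY j q) 0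
  | yy (i j : Fin n) (p q : Fin g) : i ≠ j → p ≠ 0 → q ≠ 0 → ARel n g (gY i p * gY j q) 0

/-- The algebra `A_g`: the quotient of `H^*(Σ_g^{×n}; ℚ)` by the ideal generated by the
products `x_i(p)x_j(q)`, `x_i(p)y_j(q)`, `y_i(p)y_j(q)` with `p, q ≥ 2`, `i ≠ j`. -/
def SurfA (n g : ℕ) [NeZero n] [NeZero g] : Type := RingQuot (ARel n g)

noncomputable instance (n g : ℕ) [NeZero n] [NeZero g] : Ring (SurfA n g) :=
  inferInstanceAs (Ring (RingQuot (ARel n g)))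

noncomputable instance (n g : ℕ) [NeZero n] [NeZero g] : Algebra ℚ (SurfA n g) :=
  inferInstanceAs (Algebra ℚ (RingQuot (ARel n g)))

/-- The quotient map `H^*(Σ_g^{×n}; ℚ) → A_g`. -/
noncomputable def toA (n g : ℕ) [NeZero n] [NeZero g] : SurfCoh n g →ₐ[ℚ] SurfA n g :=
  RingQuot.mkAlgHom ℚ (ARel n g)

/-- The image of `x_{i+1} = x_{i+1}(1)` in `A_g`. -/
noncomputable def xA {n g : ℕ} [NeZero n] [NeZero g] (i : Fin n) : SurfA n g :=
  toA n g (gX i 0)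

/-- The image of `y_{i+1} = y_{i+1}(1)` in `A_g`. -/
noncomputable def yA {n g : ℕ} [NeZero n] [NeZero g] (i : Fin n) : SurfA n g :=
  toA n g (gY i 0)

/-- The image of `ω_{i+1}` in `A_g`. -/
noncomputable def wA {n g : ℕ} [NeZero n] [NeZero g] (i : Fin n) : SurfA n g :=
  toA n g (gW i)

section Aux
variable {n g : ℕ}

lemma cohrel {x y : FreeAlgebra ℚ (SurfGen n g)} (h : SurfRel n g x y) :
    RingQuot.mkAlgHom ℚ (SurfRel n g) x = RingQuot.mkAlgHom ℚ (SurfRel n g) y :=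
  RingQuot.mkAlgHom_rel ℚ h

lemma gAA (k l : Fin n) (p q : Fin g) : gA k p * gA l q = -(gA l q * gA k p) := by
  have h := cohrel (SurfRel.koszul (SurfGen.a k p) (SurfGen.a l q))
  simp [gA, SurfGen.deg, map_mul] at h ⊢; exact h

lemma gABc (k l : Fin n) (p q : Fin g) : gA k p * gB l q = -(gB l q * gA k p) := by
  have h := cohrel (SurfRel.koszul (SurfGen.a k p) (SurfGen.b l q))
  simp [gA, gB, SurfGen.deg, map_mul] at h ⊢; exact h

lemma gBAc (k l : Fin n) (p q : Fin g) : gB k p * gA l q = -(gA l q * gB k p) := by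
  have h := cohrel (SurfRel.koszul (SurfGen.b k p) (SurfGen.a l q))
  simp [gA, gB, SurfGen.deg, map_mul] at h ⊢; exact h

lemma gBB (k l : Fin n) (p q : Fin g) : gB k p * gB l q = -(gB l q * gB k p) := by
  have h := cohrel (SurfRel.koszul (SurfGen.b k p) (SurfGen.b l q))
  simp [gB, SurfGen.deg, map_mul] at h ⊢; exact h

lemma gAW (k l : Fin n) (p : Fin g) : gA k p * gW l = gW l * gA k p := by
  have h := cohrel (SurfRel.koszul (SurfGen.a k p) (SurfGen.w l))
  simp [gA, gW, SurfGen.deg, map_mul] at h ⊢; exact h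

lemma gBW (k l : Fin n) (p : Fin g) : gB k p * gW l = gW l * gB k p := by
  have h := cohrel (SurfRel.koszul (SurfGen.b k p) (SurfGen.w l))
  simp [gB, gW, SurfGen.deg, map_mul] at h ⊢; exact h

lemma gAA0 (k : Fin n) (p q : Fin g) : gA k p * gA k q = 0 := by
  have h := cohrel (SurfRel.aa k p q)
  simp [gA, map_mul] at h ⊢; exact h

lemma gBB0 (k : Fin n) (p q : Fin g) : gB k p * gB k q = 0 := by
  have h := cohrel (SurfRel.bb k p q)
  simp [gB, map_mul] at h ⊢; exact h

lemma gABW (k : Fin n) (p : Fin g) : gA k p * gB k p = gW k := by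
  have h := cohrel (SurfRel.ab_eq k p)
  simp [gA, gB, gW, map_mul] at h ⊢; exact h

lemma gBAW (k : Fin n) (p : Fin g) : gB k p * gA k p = -(gW k) := by
  rw [gBAc, gABW]

end Aux
lemma massoc {R : Type*} [Ring R] {u v e : R} (h : u * v = e) (x : R) :
    u * (v * x) = e * x := by rw [← mul_assoc, h]

section Aux2
variable {n g : ℕ} [NeZero n] [NeZero g]

/-- `a`-generator in `A_g`. -/
noncomputable def tA (k : Fin n) (p : Fin g) : SurfA n g := toA n g (gA k p)
/-- `b`-generator in `A_g`. -/
noncomputable def tB (k : Fin n) (p : Fin g) : SurfA n g := toA n g (gB k p)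

lemma tAA (k l : Fin n) (p q : Fin g) : tA k p * tA l q = -(tA l q * tA k p) := by
  simp only [tA, ← map_mul, gAA k l p q, map_neg]
lemma tAB (k l : Fin n) (p q : Fin g) : tA k p * tB l q = -(tB l q * tA k p) := by
  simp only [tA, tB, ← map_mul, gABc k l p q, map_neg]
lemma tBA (k l : Fin n) (p q : Fin g) : tB k p * tA l q = -(tA l q * tB k p) := by
  simp only [tA, tB, ← map_mul, gBAc k l p q, map_neg]
lemma tBB (k l : Fin n) (p q : Fin g) : tB k p * tB l q = -(tB l q * tB k p) := by
  simp only [tB, ← map_mul, gBB k l p q, map_neg]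
lemma tAW (k l : Fin n) (p : Fin g) : tA k p * wA l = wA l * tA k p := by
  simp only [tA, wA, ← map_mul, gAW k l p]
lemma tBW (k l : Fin n) (p : Fin g) : tB k p * wA l = wA l * tB k p := by
  simp only [tB, wA, ← map_mul, gBW k l p]
lemma tAA0 (k : Fin n) (p q : Fin g) : tA k p * tA k q = 0 := by
  simp only [tA, ← map_mul, gAA0, map_zero]
lemma tBB0 (k : Fin n) (p q : Fin g) : tB k p * tB k q = 0 := by
  simp only [tB, ← map_mul, gBB0, map_zero]
lemma tABW (k : Fin n) (p : Fin g) : tA k p * tB k p = wA k := by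
  simp only [tA, tB, wA, ← map_mul, gABW]
lemma tBAW (k : Fin n) (p : Fin g) : tB k p * tA k p = -(wA k) := by
  simp only [tA, tB, wA, ← map_mul, gBAW, map_neg]

lemma tAA' (k l : Fin n) (p q : Fin g) (x : SurfA n g) :
    tA k p * (tA l q * x) = -(tA l q * (tA k p * x)) := by
  rw [massoc (tAA k l p q), neg_mul, mul_assoc]
lemma tAB' (k l : Fin n) (p q : Fin g) (x : SurfA n g) :
    tA k p * (tB l q * x) = -(tB l q * (tA k p * x)) := by
  rw [massoc (tAB k l p q), neg_mul, mul_assoc]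
lemma tBA' (k l : Fin n) (p q : Fin g) (x : SurfA n g) :
    tB k p * (tA l q * x) = -(tA l q * (tB k p * x)) := by
  rw [massoc (tBA k l p q), neg_mul, mul_assoc]
lemma tBB' (k l : Fin n) (p q : Fin g) (x : SurfA n g) :
    tB k p * (tB l q * x) = -(tB l q * (tB k p * x)) := by
  rw [massoc (tBB k l p q), neg_mul, mul_assoc]
lemma tAW' (k l : Fin n) (p : Fin g) (x : SurfA n g) :
    tA k p * (wA l * x) = wA l * (tA k p * x) := by
  rw [massoc (tAW k l p), mul_assoc]
lemma tBW' (k l : Fin n) (p : Fin g) (x : SurfA n g) :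
    tB k p * (wA l * x) = wA l * (tB k p * x) := by
  rw [massoc (tBW k l p), mul_assoc]
lemma tAA0' (k : Fin n) (p q : Fin g) (x : SurfA n g) : tA k p * (tA k q * x) = 0 := by
  rw [massoc (tAA0 k p q), zero_mul]
lemma tBB0' (k : Fin n) (p q : Fin g) (x : SurfA n g) : tB k p * (tB k q * x) = 0 := by
  rw [massoc (tBB0 k p q), zero_mul]
lemma tABW' (k : Fin n) (p : Fin g) (x : SurfA n g) : tA k p * (tB k p * x) = wA k * x :=
  massoc (tABW k p) x
lemma tBAW' (k : Fin n) (p : Fin g) (x : SurfA n g) : tB k p * (tA k p * x) = -(wA k * x) := by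
  rw [massoc (tBAW k p), neg_mul]

end Aux2
section Aux3
variable {n g : ℕ} [NeZero n] [NeZero g]

lemma wAsq (k : Fin n) : wA k * wA (n := n) (g := g) k = 0 := by
  rw [← tABW k 0, mul_assoc, tBA' k k 0 0]
  simp [tBB0]

lemma tAA0ne (hg : 2 ≤ g) (k l : Fin n) (hkl : k ≠ l) :
    tA (n := n) (g := g) k ⟨1, by omega⟩ * tA l ⟨1, by omega⟩ = 0 := by
  set p : Fin g := ⟨1, by omega⟩ with hpdef
  have hp : p ≠ 0 := by simp [hpdef, Fin.ext_iff]
  have hx := RingQuot.mkAlgHom_rel ℚ (ARel.xx k l p p hkl hp hp)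
  have hgx : ∀ m : Fin n, gX (n := n) (g := g) m p = gA m p := by
    intro m; simp [gX, hp]
  rw [hgx, hgx] at hx
  simp [tA, toA, map_mul] at hx ⊢; exact hx

lemma wAW (hg : 2 ≤ g) (k l : Fin n) : wA k * wA (n := n) (g := g) l = 0 := by
  rcases eq_or_ne k l with rfl | hkl
  · exact wAsq k
  · set p : Fin g := ⟨1, by omega⟩ with hpdef
    rw [← tABW k p, ← tABW l p, mul_assoc, tBA' k l p p, mul_neg, ← mul_assoc,
      tAA0ne hg k l hkl, zero_mul, neg_zero]

lemma wAW' (hg : 2 ≤ g) (k l : Fin n) (x : SurfA n g) : wA k * (wA l * x) = 0 := by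
  rw [massoc (wAW hg k l), zero_mul]

end Aux3
/-- In `A_g` (`g ≥ 2`, `n ≥ 3`), for distinct `i, j ∈ {2,…,n}`:
`y_i x_j (x_i y_j) = y_1 ω_i x_j + y_1 x_i ω_j - x_1 ω_i y_j - x_1 y_i ω_j
  + ω_1 y_i x_j - ω_1 x_i y_j`. -/
theorem stmt10 (n g : ℕ) [NeZero n] [NeZero g] (hn : 3 ≤ n) (hg : 2 ≤ g)
    (i j : Fin n) (hi : i ≠ 0) (hj : j ≠ 0) (hij : i ≠ j) :
    yA i * xA j * (xA i * yA j) =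
      (yA 0 * wA i * xA j + yA 0 * xA i * wA j - xA 0 * wA i * yA j - xA 0 * yA i * wA j
        + wA 0 * (yA i * xA j) - wA 0 * (xA i * yA j) : SurfA n g) := by
  have hx : ∀ k : Fin n, k ≠ 0 → xA (n := n) (g := g) k = tA k 0 - tA 0 0 := by
    intro k hk; simp [xA, gX, hk, tA, map_sub]
  have hy : ∀ k : Fin n, k ≠ 0 → yA (n := n) (g := g) k = tB k 0 - tB 0 0 := by
    intro k hk; simp [yA, gY, hk, tB, map_sub]
  have hx0 : xA (n := n) (g := g) 0 = tA 0 0 := by simp [xA, gX, tA]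
  have hy0 : yA (n := n) (g := g) 0 = tB 0 0 := by simp [yA, gY, tB]
  rw [hx i hi, hx j hj, hy i hi, hy j hj, hx0, hy0]
  simp only [mul_sub, sub_mul, mul_add, add_mul, mul_neg, neg_mul, neg_neg, mul_assoc,
    tAA i 0, tAA j 0, tAA j i, tAA' i 0, tAA' j 0, tAA' j i,
    tBB i 0, tBB j 0, tBB j i, tBB' i 0, tBB' j 0, tBB' j i,
    tAB i 0, tAB j 0, tAB j i, tAB' i 0, tAB' j 0, tAB' j i,
    tBA i 0, tBA j 0, tBA j i, tBA' i 0, tBA' j 0, tBA' j i,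
    tAA0, tBB0, tABW, tBAW, tAA0', tBB0', tABW', tBAW',
    tAW, tBW, tAW', tBW', wAW hg, wAW' hg,
    mul_zero, zero_mul, neg_zero, sub_zero, zero_sub, add_zero, zero_add]
  abel
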